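/- For the program doubleSquare composed with itself by synchronizing control structures (both loop bodies taken in parallel when both loop guards hold), no quantifier-free linear integer arithmetic formula over (x, y₁, z₁, y₂, z₂) is an inductive invariant establishing y₁ = y₂ at termination. Specifically: any finite disjunction of convex (LIA-cube-definable) sets containing all reachable loop-exit states of the form (n, n², n, n², 0) for even n must contain a midpoint state ((n+m)/2, (n²+m²)/2, (n+m)/2, (n²+m²)/2, 0) from which executing the loop yields y₁ = (n²+m²)/2 + ((n+m)/2)² ≠ (n²+m²)/2 = y₂, violating safety. -/
import Mathlib


/-- No QFLIA invariant exists for the control-structure-synchronized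
self-composition of `doubleSquare`.  Specifically: any finite family of integer-convex
(LIA-cube-definable) sets whose union contains all reachable loop-exit states
`(n, n², n, n², 0)` for even `n > 0` must contain, in one of its members, a midpoint
state `w = ((n+m)/2, (n²+m²)/2, (n+m)/2, (n²+m²)/2, 0)` with `n ≠ m`, from which
executing the loop yields `y₁ = w 1 + w 0 * w 2 ≠ w 3 = y₂`, violating safety. -/
theorem no_qflia_invariant_for_sync_doubleSquare {ι : Type*} [Finite ι]
    (D : ι → Set (Fin 5 → ℤ))
    (hconv : ∀ j : ι, ∀ u ∈ D j, ∀ v ∈ D j, ∀ p q : ℤ, 0 ≤ p → 0 ≤ q → 0 < p + q →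
      ∀ w : Fin 5 → ℤ, (∀ i, (p + q) * w i = p * u i + q * v i) → w ∈ D j)
    (hcover : ∀ n : ℤ, 0 < n → Even n →
      (![n, n ^ 2, n, n ^ 2, 0] : Fin 5 → ℤ) ∈ ⋃ j, D j) :
    ∃ (j : ι) (n m : ℤ), 0 < n ∧ 0 < m ∧ Even n ∧ Even m ∧ n ≠ m ∧
      ∃ w : Fin 5 → ℤ,
        (∀ i, 2 * w i =
          (![n, n ^ 2, n, n ^ 2, 0] : Fin 5 → ℤ) i +
          (![m, m ^ 2, m, m ^ 2, 0] : Fin 5 → ℤ) i) ∧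
        w ∈ D j ∧ w 1 + w 0 * w 2 ≠ w 3 := by
  classical
  -- for each k : ℕ, the state for n = 2(k+1) lies in some D (g k)
  have hmem : ∀ k : ℕ, ∃ j : ι,
      (![(2*((k:ℤ)+1)), (2*((k:ℤ)+1))^2, (2*((k:ℤ)+1)), (2*((k:ℤ)+1))^2, 0] : Fin 5 → ℤ) ∈ D j := by
    intro k
    have h := hcover (2*((k:ℤ)+1)) (by positivity) ⟨(k:ℤ)+1, by ring⟩
    simpa [Set.mem_iUnion] using h
  choose g hg using hmem
  obtain ⟨k, l, hkl, hgkl⟩ := Finite.exists_ne_map_eq_of_infinite g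
  set a : ℤ := (k:ℤ) + 1
  set b : ℤ := (l:ℤ) + 1
  refine ⟨g k, 2*a, 2*b, by positivity, by positivity, ⟨a, by ring⟩, ⟨b, by ring⟩,
    ?_, ![a+b, 2*a^2+2*b^2, a+b, 2*a^2+2*b^2, 0], ?_, ?_, ?_⟩
  · intro h
    apply hkl
    have : (k:ℤ) = (l:ℤ) := by omega
    exact_mod_cast this
  · intro i
    fin_cases i <;> simp <;> ring
  · refine hconv (g k) _ (hg k) _ (hgkl ▸ hg l) 1 1 zero_le_one zero_le_one (by norm_num)
      _ (fun i => ?_)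
    fin_cases i <;> simp <;> ring
  · simp only [Matrix.cons_val_zero, Matrix.cons_val_one, Matrix.cons_val_two,
      Matrix.cons_val_three, Matrix.head_cons, Matrix.tail_cons]
    have hab : 0 < a + b := by positivity
    intro h
    nlinarith [sq_nonneg (a+b)]
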